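/- Let X be a real n×N₁ matrix, Y a real m×N₁ matrix, U a real m×N₂ matrix, V a real n×N₂ matrix, and L ≥ 0. Suppose Xᵀ·V = Yᵀ·U, Yᵀ·Y ⪯ L²·Xᵀ·X, and Vᵀ·V ⪯ L²·Uᵀ·U. Then there exist natural numbers n_R, m_R and matrices X_R (n_R×N₁), Y_R (m_R×N₁), U_R (m_R×N₂), V_R (n_R×N₂) such that: (i) the Gram matrices agree, i.e., [X V]ᵀ·[X V] = [X_R V_R]ᵀ·[X_R V_R] and [Y U]ᵀ·[Y U] = [Y_R U_R]ᵀ·[Y_R U_R], where [A B] denotes horizontal concatenation; and (ii) there exists a real m_R×n_R matrix M_R with σ_max(M_R) ≤ L such that Y_R = M_R·X_R and V_R = M_Rᵀ·U_R. -/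

import Mathlib

open Matrix


section Helpers

variable {n m k : ℕ}

lemma psd_of_quad (A : Matrix (Fin n) (Fin n) ℝ) (hsym : Aᵀ = A)
    (h : ∀ x : Fin n → ℝ, 0 ≤ x ⬝ᵥ A *ᵥ x) : A.PosSemidef := by
  refine Matrix.posSemidef_iff_dotProduct_mulVec.mpr ⟨?_, fun x => ?_⟩
  · show Aᴴ = A
    rwa [conjTranspose_eq_transpose_of_trivial]
  · simpa using h x

lemma psd_quad {A : Matrix (Fin n) (Fin n) ℝ} (hA : A.PosSemidef) (x : Fin n → ℝ) :
    0 ≤ x ⬝ᵥ A *ᵥ x := by simpa using hA.dotProduct_mulVec_nonneg x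

lemma psd_symm {A : Matrix (Fin n) (Fin n) ℝ} (hA : A.PosSemidef) : Aᵀ = A := by
  have := hA.1
  rwa [Matrix.IsHermitian, conjTranspose_eq_transpose_of_trivial] at this

lemma quad_mul (B : Matrix (Fin m) (Fin n) ℝ) (x : Fin n → ℝ) :
    x ⬝ᵥ (Bᵀ * B) *ᵥ x = (B *ᵥ x) ⬝ᵥ (B *ᵥ x) := by
  rw [← Matrix.mulVec_mulVec, Matrix.dotProduct_mulVec, Matrix.vecMul_transpose]

lemma psd_smul {A : Matrix (Fin n) (Fin n) ℝ} (hA : A.PosSemidef) {c : ℝ} (hc : 0 ≤ c) :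
    (c • A).PosSemidef := by
  refine psd_of_quad _ ?_ fun x => ?_
  · rw [Matrix.transpose_smul, psd_symm hA]
  · rw [Matrix.smul_mulVec, dotProduct_smul, smul_eq_mul]
    exact mul_nonneg hc (psd_quad hA x)

/-- congruence preserves PSD, real version -/
lemma psd_conj {A : Matrix (Fin n) (Fin n) ℝ} (hA : A.PosSemidef)
    (B : Matrix (Fin m) (Fin n) ℝ) : (B * A * Bᵀ).PosSemidef := by
  have := hA.mul_mul_conjTranspose_same B
  rwa [conjTranspose_eq_transpose_of_trivial] at this

lemma psd_mul_self (B : Matrix (Fin m) (Fin n) ℝ) : (Bᵀ * B).PosSemidef := by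
  have := Matrix.posSemidef_conjTranspose_mul_self B
  rwa [conjTranspose_eq_transpose_of_trivial] at this

end Helpers


section CS

variable {n m : ℕ}

lemma dot_CS (x y : Fin n → ℝ) : (x ⬝ᵥ y) ^ 2 ≤ (x ⬝ᵥ x) * (y ⬝ᵥ y) := by
  have h := Finset.sum_mul_sq_le_sq_mul_sq Finset.univ x y
  simpa [dotProduct, pow_two] using h

lemma dot_self_nonneg (x : Fin n → ℝ) : 0 ≤ x ⬝ᵥ x :=
  Finset.sum_nonneg fun i _ => mul_self_nonneg _

/-- transfer lemma : `AᵀA ⪯ c·1 → AAᵀ ⪯ c·1` -/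
lemma psd_transfer {c : ℝ} (hc : 0 ≤ c) (A : Matrix (Fin m) (Fin n) ℝ)
    (h : (c • (1 : Matrix (Fin n) (Fin n) ℝ) - Aᵀ * A).PosSemidef) :
    (c • (1 : Matrix (Fin m) (Fin m) ℝ) - A * Aᵀ).PosSemidef := by
  have key : ∀ x : Fin n → ℝ, (A *ᵥ x) ⬝ᵥ (A *ᵥ x) ≤ c * (x ⬝ᵥ x) := by
    intro x
    have h0 := psd_quad h x
    rw [Matrix.sub_mulVec, dotProduct_sub, Matrix.smul_mulVec,
      Matrix.one_mulVec, dotProduct_smul, quad_mul, smul_eq_mul] at h0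
    linarith
  refine psd_of_quad _ ?_ fun z => ?_
  · simp [Matrix.transpose_sub, Matrix.transpose_smul, Matrix.transpose_mul]
  · have expand : z ⬝ᵥ (c • (1 : Matrix (Fin m) (Fin m) ℝ) - A * Aᵀ) *ᵥ z
        = c * (z ⬝ᵥ z) - (Aᵀ *ᵥ z) ⬝ᵥ (Aᵀ *ᵥ z) := by
    -- z ⬝ (A*Aᵀ) z = (Aᵀ z)⬝(Aᵀ z)
      rw [Matrix.sub_mulVec, dotProduct_sub, Matrix.smul_mulVec,
        Matrix.one_mulVec, dotProduct_smul, smul_eq_mul]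
      congr 1
      have : (A * Aᵀ) = (Aᵀ)ᵀ * Aᵀ := by rw [Matrix.transpose_transpose]
      rw [this, quad_mul]
    rw [expand, sub_nonneg]
    set w := Aᵀ *ᵥ z with hw
    -- (w⬝w)^2 = (z ⬝ A w)^2 ≤ (z⬝z)((Aw)⬝(Aw)) ≤ (z⬝z) c (w⬝w)
    have e1 : z ⬝ᵥ (A *ᵥ w) = w ⬝ᵥ w := by
      rw [Matrix.dotProduct_mulVec, ← Matrix.mulVec_transpose]
    have e2 : (w ⬝ᵥ w) ^ 2 ≤ (z ⬝ᵥ z) * ((A *ᵥ w) ⬝ᵥ (A *ᵥ w)) := by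
      rw [← e1]; exact dot_CS z (A *ᵥ w)
    have e3 : (z ⬝ᵥ z) * ((A *ᵥ w) ⬝ᵥ (A *ᵥ w)) ≤ (z ⬝ᵥ z) * (c * (w ⬝ᵥ w)) :=
      mul_le_mul_of_nonneg_left (key w) (dot_self_nonneg z)
    have e4 : (w ⬝ᵥ w) ^ 2 ≤ (z ⬝ᵥ z) * (c * (w ⬝ᵥ w)) := le_trans e2 e3
    rcases eq_or_lt_of_le (dot_self_nonneg w) with h0 | h0
    · rw [← h0]; exact mul_nonneg hc (dot_self_nonneg z)
    · nlinarith [dot_self_nonneg z]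

/-- if `Z` symmetric and `Z*Z ⪯ Z` then `Z ⪯ 1`. -/
lemma psd_le_one_of_sq {Z : Matrix (Fin n) (Fin n) ℝ} (hsym : Zᵀ = Z)
    (h : (Z - Z * Z).PosSemidef) : ((1 : Matrix (Fin n) (Fin n) ℝ) - Z).PosSemidef := by
  refine psd_of_quad _ ?_ fun x => ?_
  · simp [Matrix.transpose_sub, hsym]
  · rw [Matrix.sub_mulVec, dotProduct_sub, Matrix.one_mulVec, sub_nonneg]
    set u := Z *ᵥ x with hu
    have h0 := psd_quad h x
    rw [Matrix.sub_mulVec, dotProduct_sub, sub_nonneg] at h0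
    have e0 : x ⬝ᵥ (Z * Z) *ᵥ x = u ⬝ᵥ u := by
      have : Z * Z = Zᵀ * Z := by rw [hsym]
      rw [this, quad_mul]
    rw [e0] at h0
    -- α := x ⬝ᵥ u ; α² ≤ (x⬝x)(u⬝u) ≤ (x⬝x) α
    have e2 : (x ⬝ᵥ u) ^ 2 ≤ (x ⬝ᵥ x) * (u ⬝ᵥ u) := dot_CS x u
    rcases eq_or_lt_of_le (le_trans (dot_self_nonneg u) h0) with h3 | h3
    · -- x ⬝ᵥ u = 0 case: α = 0 ≤ x⬝x... careful h3 : 0 = x ⬝ᵥ Z *ᵥ x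
      rw [← h3]; exact dot_self_nonneg x
    · nlinarith [dot_self_nonneg x, dot_self_nonneg u]

end CS

section Pinv

variable {k : ℕ}

lemma exists_pinv (G : Matrix (Fin k) (Fin k) ℝ) (hG : Gᵀ = G) :
    ∃ Gp : Matrix (Fin k) (Fin k) ℝ,
      Gpᵀ = Gp ∧ G * Gp = Gp * G ∧ G * Gp * G = G ∧ Gp * G * Gp = Gp := by
  have hG' : G.IsHermitian := by
    show Gᴴ = G; rwa [conjTranspose_eq_transpose_of_trivial]
  set U : Matrix (Fin k) (Fin k) ℝ := (hG'.eigenvectorUnitary : Matrix (Fin k) (Fin k) ℝ) with hU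
  have hUU : star U * U = 1 := Matrix.mem_unitaryGroup_iff'.mp (hG'.eigenvectorUnitary).2
  set d : Fin k → ℝ := hG'.eigenvalues with hd
  have hspec : G = U * diagonal d * star U := by
    have := hG'.spectral_theorem
    simpa using this
  set dp : Fin k → ℝ := fun i => if d i = 0 then 0 else (d i)⁻¹ with hdp
  have collapse : ∀ e f : Fin k → ℝ,
      (U * diagonal e * star U) * (U * diagonal f * star U)
        = U * diagonal (fun i => e i * f i) * star U := by
    intro e f
    calc (U * diagonal e * star U) * (U * diagonal f * star U)
        = U * diagonal e * ((star U * U) * (diagonal f * star U)) := by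
          simp only [Matrix.mul_assoc]
      _ = U * diagonal e * (diagonal f * star U) := by rw [hUU, Matrix.one_mul]
      _ = U * (diagonal e * diagonal f) * star U := by simp only [Matrix.mul_assoc]
      _ = U * diagonal (fun i => e i * f i) * star U := by rw [Matrix.diagonal_mul_diagonal]
  refine ⟨U * diagonal dp * star U, ?_, ?_, ?_, ?_⟩
  · -- symmetry
    have h1 : (U * diagonal dp * star U)ᴴ = U * diagonal dp * star U := by
      simp only [Matrix.conjTranspose_mul, Matrix.star_eq_conjTranspose,
        Matrix.conjTranspose_conjTranspose, Matrix.diagonal_conjTranspose]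
      simp only [star_trivial, Matrix.mul_assoc]
    rwa [conjTranspose_eq_transpose_of_trivial] at h1
  · have hfun : (fun i => d i * dp i) = (fun i => dp i * d i) :=
      funext fun i => mul_comm _ _
    rw [hspec, collapse, collapse, hfun]
  · have hfun : (fun i => d i * dp i * d i) = d := by
      funext i
      by_cases h : d i = 0
      · simp [h]
      · simp only [hdp, if_neg h]; field_simp
    rw [hspec, collapse, collapse, hfun]
  · have hfun : (fun i => dp i * d i * dp i) = dp := by
      funext i
      by_cases h : d i = 0
      · simp [hdp, h]
      · simp only [hdp, if_neg h]; field_simp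
    rw [hspec, collapse, collapse, hfun]

end Pinv
section ProjA
variable {n m N l : ℕ}

lemma gram_kernel (c : ℝ) (X : Matrix (Fin n) (Fin N) ℝ) (Y : Matrix (Fin m) (Fin N) ℝ)
    (h : (c • (Xᵀ * X) - Yᵀ * Y).PosSemidef) (W : Matrix (Fin N) (Fin l) ℝ)
    (hW : Xᵀ * X * W = 0) : Y * W = 0 := by
  ext i j
  simp only [Matrix.zero_apply]
  set w : Fin N → ℝ := fun p => W p j with hw
  have hcol : (Xᵀ * X) *ᵥ w = 0 := by
    funext i'
    simp only [Pi.zero_apply]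
    have h0 : (Xᵀ * X * W) i' j = 0 := by rw [hW]; simp
    rw [← h0]
    simp [Matrix.mul_apply, Matrix.mulVec, dotProduct, hw]
  have hq := psd_quad h w
  rw [Matrix.sub_mulVec, dotProduct_sub, Matrix.smul_mulVec,
    dotProduct_smul, hcol, quad_mul] at hq
  simp only [dotProduct_zero, smul_zero] at hq
  have hY : (Y *ᵥ w) ⬝ᵥ (Y *ᵥ w) = 0 := le_antisymm (by linarith) (dot_self_nonneg _)
  have hY0 : Y *ᵥ w = 0 := dotProduct_self_eq_zero.mp hY
  have h1 : (Y *ᵥ w) i = 0 := by rw [hY0]; rfl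
  rw [← h1]
  simp [Matrix.mul_apply, Matrix.mulVec, dotProduct, hw]

lemma exists_projA (c : ℝ) (hc : 0 ≤ c) (X : Matrix (Fin n) (Fin N) ℝ)
    (Y : Matrix (Fin m) (Fin N) ℝ)
    (h : (c • (Xᵀ * X) - Yᵀ * Y).PosSemidef) :
    ∃ (P : Matrix (Fin n) (Fin n) ℝ) (A : Matrix (Fin m) (Fin n) ℝ),
      Pᵀ = P ∧ P * P = P ∧ P * X = X ∧ A * X = Y ∧
      (∀ {l : ℕ} (F : Matrix (Fin n) (Fin l) ℝ), Xᵀ * F = 0 → P * F = 0) ∧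
      (∀ {l : ℕ} (F : Matrix (Fin n) (Fin l) ℝ), Xᵀ * F = 0 → A * F = 0) ∧
      (∀ {l : ℕ} (F : Matrix (Fin l) (Fin n) ℝ), F * X = 0 → F * P = 0) ∧
      (c • (1 : Matrix (Fin n) (Fin n) ℝ) - Aᵀ * A).PosSemidef ∧
      (c • P - Aᵀ * A).PosSemidef := by
  set G : Matrix (Fin N) (Fin N) ℝ := Xᵀ * X with hGdef
  have hGsym : Gᵀ = G := by
    rw [hGdef, Matrix.transpose_mul, Matrix.transpose_transpose]
  obtain ⟨Gp, hGp_sym, hGp_comm, hMP1, hMP2⟩ := exists_pinv G hGsym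
  have hker0 : G * (1 - Gp * G) = 0 := by
    rw [Matrix.mul_sub, Matrix.mul_one, ← Matrix.mul_assoc, hMP1, sub_self]
  have htriv : ((1:ℝ) • (Xᵀ * X) - Xᵀ * X).PosSemidef := by
    rw [one_smul, sub_self]; exact Matrix.PosSemidef.zero
  have hXPi : X * (Gp * G) = X := by
    have h5 := gram_kernel 1 X X htriv (1 - Gp * G) (by rw [← hGdef]; exact hker0)
    rw [Matrix.mul_sub, Matrix.mul_one, sub_eq_zero] at h5
    exact h5.symm
  have hYPi : Y * (Gp * G) = Y := by
    have h5 := gram_kernel c X Y h (1 - Gp * G) (by rw [← hGdef]; exact hker0)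
    rw [Matrix.mul_sub, Matrix.mul_one, sub_eq_zero] at h5
    exact h5.symm
  set P : Matrix (Fin n) (Fin n) ℝ := X * Gp * Xᵀ with hPdef
  set A : Matrix (Fin m) (Fin n) ℝ := Y * Gp * Xᵀ with hAdef
  have hPsym : Pᵀ = P := by
    rw [hPdef, Matrix.transpose_mul, Matrix.transpose_mul, Matrix.transpose_transpose, hGp_sym,
      Matrix.mul_assoc]
  have hPP : P * P = P := by
    calc P * P = X * (Gp * G * Gp) * Xᵀ := by
          rw [hPdef, hGdef]; simp only [Matrix.mul_assoc]
      _ = P := by rw [hMP2, hPdef, Matrix.mul_assoc]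
  have hPX : P * X = X := by
    calc P * X = X * (Gp * G) := by rw [hPdef, hGdef]; simp only [Matrix.mul_assoc]
      _ = X := hXPi
  have hAX : A * X = Y := by
    calc A * X = Y * (Gp * G) := by rw [hAdef, hGdef]; simp only [Matrix.mul_assoc]
      _ = Y := hYPi
  have hAA_P : (c • P - Aᵀ * A).PosSemidef := by
    have hconj := psd_conj h (X * Gp)
    have hexp : (X * Gp) * (c • (Xᵀ * X) - Yᵀ * Y) * (X * Gp)ᵀ = c • P - Aᵀ * A := by
      rw [Matrix.transpose_mul, hGp_sym]
      rw [Matrix.mul_sub, Matrix.sub_mul]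
      congr 1
      · rw [Matrix.mul_smul, Matrix.smul_mul]
        congr 1
        calc X * Gp * (Xᵀ * X) * (Gp * Xᵀ) = X * (Gp * G * Gp) * Xᵀ := by
              rw [hGdef]; simp only [Matrix.mul_assoc]
          _ = P := by rw [hMP2, hPdef, Matrix.mul_assoc]
      · rw [hAdef, Matrix.transpose_mul, Matrix.transpose_mul, Matrix.transpose_transpose,
          hGp_sym]
        simp only [Matrix.mul_assoc]
    rw [hexp] at hconj
    exact hconj
  have hone_sub_P : ((1 : Matrix (Fin n) (Fin n) ℝ) - P).PosSemidef := by
    have h6 := psd_mul_self ((1 : Matrix (Fin n) (Fin n) ℝ) - P)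
    have h7 : ((1 : Matrix (Fin n) (Fin n) ℝ) - P)ᵀ * (1 - P) = 1 - P := by
      rw [Matrix.transpose_sub, Matrix.transpose_one, hPsym]
      rw [Matrix.mul_sub, Matrix.mul_one, Matrix.sub_mul, Matrix.one_mul, hPP]
      abel
    rwa [h7] at h6
  have hAA_one : (c • (1 : Matrix (Fin n) (Fin n) ℝ) - Aᵀ * A).PosSemidef := by
    have h8 : c • (1 : Matrix (Fin n) (Fin n) ℝ) - Aᵀ * A
        = c • ((1 : Matrix (Fin n) (Fin n) ℝ) - P) + (c • P - Aᵀ * A) := by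
      rw [smul_sub]; abel
    rw [h8]
    exact (psd_smul hone_sub_P hc).add hAA_P
  refine ⟨P, A, hPsym, hPP, hPX, hAX, ?_, ?_, ?_, hAA_one, hAA_P⟩
  · intro l F hF
    calc P * F = X * Gp * (Xᵀ * F) := by rw [hPdef, Matrix.mul_assoc]
      _ = 0 := by rw [hF, Matrix.mul_zero]
  · intro l F hF
    calc A * F = Y * Gp * (Xᵀ * F) := by rw [hAdef, Matrix.mul_assoc]
      _ = 0 := by rw [hF, Matrix.mul_zero]
  · intro l F hF
    calc F * P = F * X * (Gp * Xᵀ) := by rw [hPdef]; simp only [Matrix.mul_assoc]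
      _ = 0 := by rw [hF, Matrix.zero_mul]

end ProjA
section Core
variable {n m N₁ N₂ : ℕ}

lemma conj_sub_smul {n k : ℕ} (a : ℝ) (G : Matrix (Fin k) (Fin n) ℝ)
    (H : Matrix (Fin k) (Fin k) ℝ) :
    Gᵀ * (a • 1 - H) * G = a • (Gᵀ * G) - Gᵀ * H * G := by
  rw [Matrix.mul_sub, Matrix.mul_smul, Matrix.mul_one, Matrix.sub_mul, Matrix.smul_mul]

set_option maxHeartbeats 2000000 in
lemma exists_M_eps (L ε : ℝ) (hL : 0 ≤ L) (hε : 0 < ε)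
    (X : Matrix (Fin n) (Fin N₁) ℝ) (Y : Matrix (Fin m) (Fin N₁) ℝ)
    (U : Matrix (Fin m) (Fin N₂) ℝ) (V : Matrix (Fin n) (Fin N₂) ℝ)
    (h1 : Xᵀ * V = Yᵀ * U)
    (h2 : (L ^ 2 • (Xᵀ * X) - Yᵀ * Y).PosSemidef)
    (h3 : (L ^ 2 • (Uᵀ * U) - Vᵀ * V).PosSemidef) :
    ∃ M : Matrix (Fin m) (Fin n) ℝ, M * X = Y ∧ Mᵀ * U = V ∧
      ((L ^ 2 + ε) • (1 : Matrix (Fin n) (Fin n) ℝ) - Mᵀ * M).PosSemidef := by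
  set c : ℝ := L ^ 2 with hcdef
  have hc : 0 ≤ c := sq_nonneg L
  set ce : ℝ := c + ε with hcedef
  have hce : 0 ≤ ce := by positivity
  obtain ⟨P, A, hPsym, hPP, hPX, hAX, hPkill, hAkill, hPrkill, hAA_one, hAA_P⟩ :=
    exists_projA c hc X Y h2
  obtain ⟨Q, B, hQsym, hQQ, hQU, hBU, hQkill, hBkill, hQrkill, hBB_one, hBB_Q⟩ :=
    exists_projA c hc U V h3
  -- basic derived identities
  have hXtP : Xᵀ * (1 - P) = 0 := by
    rw [Matrix.mul_sub, Matrix.mul_one, sub_eq_zero]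
    calc Xᵀ = (P * X)ᵀ := by rw [hPX]
      _ = Xᵀ * P := by rw [Matrix.transpose_mul, hPsym]
  have hAP : A * P = A := by
    have h0 := hAkill (1 - P) hXtP
    rw [Matrix.mul_sub, Matrix.mul_one, sub_eq_zero] at h0
    exact h0.symm
  have hUtQ : Uᵀ * (1 - Q) = 0 := by
    rw [Matrix.mul_sub, Matrix.mul_one, sub_eq_zero]
    calc Uᵀ = (Q * U)ᵀ := by rw [hQU]
      _ = Uᵀ * Q := by rw [Matrix.transpose_mul, hQsym]
  have hBQ : B * Q = B := by
    have h0 := hBkill (1 - Q) hUtQ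
    rw [Matrix.mul_sub, Matrix.mul_one, sub_eq_zero] at h0
    exact h0.symm
  have hQBt : Q * Bᵀ = Bᵀ := by
    calc Q * Bᵀ = Qᵀ * Bᵀ := by rw [hQsym]
      _ = (B * Q)ᵀ := by rw [← Matrix.transpose_mul]
      _ = Bᵀ := by rw [hBQ]
  have hB1Q : B * (1 - Q) = 0 := by rw [Matrix.mul_sub, Matrix.mul_one, hBQ, sub_self]
  have h1QU : (1 - Q) * U = 0 := by rw [Matrix.sub_mul, Matrix.one_mul, hQU, sub_self]
  have h1PX : (1 - P) * X = 0 := by rw [Matrix.sub_mul, Matrix.one_mul, hPX, sub_self]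
  -- Bᵀ X = Q Y
  have hBtX : Bᵀ * X = Q * Y := by
    have hUF : Uᵀ * (Bᵀ * X - Q * Y) = 0 := by
      rw [Matrix.mul_sub]
      have e1 : Uᵀ * (Bᵀ * X) = Vᵀ * X := by
        calc Uᵀ * (Bᵀ * X) = (B * U)ᵀ * X := by
              rw [Matrix.transpose_mul, Matrix.mul_assoc]
          _ = Vᵀ * X := by rw [hBU]
      have e2 : Uᵀ * (Q * Y) = Uᵀ * Y := by
        calc Uᵀ * (Q * Y) = (Q * U)ᵀ * Y := by
              rw [Matrix.transpose_mul, hQsym, Matrix.mul_assoc]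
          _ = Uᵀ * Y := by rw [hQU]
      have e3 : Vᵀ * X = Uᵀ * Y := by
        calc Vᵀ * X = (Xᵀ * V)ᵀ := by rw [Matrix.transpose_mul, Matrix.transpose_transpose]
          _ = (Yᵀ * U)ᵀ := by rw [h1]
          _ = Uᵀ * Y := by rw [Matrix.transpose_mul, Matrix.transpose_transpose]
      rw [e1, e2, e3, sub_self]
    have h0 := hQkill _ hUF
    rw [Matrix.mul_sub, sub_eq_zero] at h0
    calc Bᵀ * X = Q * (Bᵀ * X) := by rw [← Matrix.mul_assoc, hQBt]
      _ = Q * (Q * Y) := by rw [h0]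
      _ = Q * Y := by rw [← Matrix.mul_assoc, hQQ]
  -- compatibility
  have hcompat : Q * A = Bᵀ * P := by
    have hFX : (Q * A - Bᵀ * P) * X = 0 := by
      rw [Matrix.sub_mul]
      rw [Matrix.mul_assoc, hAX, Matrix.mul_assoc, hPX, hBtX, sub_self]
    have h0 := hPrkill _ hFX
    rw [Matrix.sub_mul] at h0
    rw [Matrix.mul_assoc Q A P, hAP, Matrix.mul_assoc Bᵀ P P, hPP, sub_eq_zero] at h0
    exact h0
  -- transfer : B Bᵀ ⪯ c 1
  have hBBt : (c • (1 : Matrix (Fin n) (Fin n) ℝ) - B * Bᵀ).PosSemidef := by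
    have := psd_transfer hc B hBB_one
    exact this
  have hone_sub_P : ((1 : Matrix (Fin n) (Fin n) ℝ) - P).PosSemidef := by
    have h6 := psd_mul_self ((1 : Matrix (Fin n) (Fin n) ℝ) - P)
    have h7 : ((1 : Matrix (Fin n) (Fin n) ℝ) - P)ᵀ * (1 - P) = 1 - P := by
      rw [Matrix.transpose_sub, Matrix.transpose_one, hPsym, Matrix.mul_sub, Matrix.mul_one,
        Matrix.sub_mul, Matrix.one_mul, hPP]
      abel
    rwa [h7] at h6
  -- c•1 - P B Bᵀ P psd
  have hPBB : (c • (1 : Matrix (Fin n) (Fin n) ℝ) - P * (B * Bᵀ) * P).PosSemidef := by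
    have hconj := psd_conj hBBt P
    have he : P * (c • (1 : Matrix (Fin n) (Fin n) ℝ) - B * Bᵀ) * Pᵀ
        = c • P - P * (B * Bᵀ) * P := by
      rw [hPsym, Matrix.mul_sub, Matrix.sub_mul, Matrix.mul_smul, Matrix.mul_one,
        Matrix.smul_mul]
      congr 1
      rw [hPP]
    rw [he] at hconj
    have hsplit : c • (1 : Matrix (Fin n) (Fin n) ℝ) - P * (B * Bᵀ) * P
        = c • ((1 : Matrix (Fin n) (Fin n) ℝ) - P) + (c • P - P * (B * Bᵀ) * P) := by
      rw [smul_sub]; abel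
    rw [hsplit]
    exact (psd_smul hone_sub_P hc).add hconj

  -- abbreviations
  set R : Matrix (Fin n) (Fin n) ℝ := B * Bᵀ with hRdef
  have hRsym : Rᵀ = R := by
    rw [hRdef, Matrix.transpose_mul, Matrix.transpose_transpose]
  set PRP : Matrix (Fin n) (Fin n) ℝ := P * R * P with hPRPdef
  have hPPa : ∀ {k : ℕ} (x : Matrix (Fin n) (Fin k) ℝ), P * (P * x) = P * x := by
    intro k x; rw [← Matrix.mul_assoc, hPP]
  have hPRPsym : PRPᵀ = PRP := by
    rw [hPRPdef, Matrix.transpose_mul, Matrix.transpose_mul, hPsym, hRsym]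
    simp only [hRdef, Matrix.mul_assoc]
  have h1P1P : ((1:Matrix (Fin n) (Fin n) ℝ) - P) * (1 - P) = 1 - P := by
    rw [Matrix.mul_sub, Matrix.mul_one, Matrix.sub_mul, Matrix.one_mul, hPP]; abel
  have h1Q1Q : ((1:Matrix (Fin m) (Fin m) ℝ) - Q) * (1 - Q) = 1 - Q := by
    rw [Matrix.mul_sub, Matrix.mul_one, Matrix.sub_mul, Matrix.one_mul, hQQ]; abel
  -- S and its inverse
  set S : Matrix (Fin n) (Fin n) ℝ := ce • 1 - PRP with hSdef
  have hSsym : Sᵀ = S := by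
    rw [hSdef, Matrix.transpose_sub, Matrix.transpose_smul, Matrix.transpose_one, hPRPsym]
  have hSpd : S.PosDef := by
    have hsplit : S = (c • (1 : Matrix (Fin n) (Fin n) ℝ) - PRP) + ε • 1 := by
      rw [hSdef, hcedef, add_smul]; abel
    rw [hsplit]
    refine Matrix.PosDef.posSemidef_add ?_ ?_
    · exact hPBB
    · refine Matrix.posDef_iff_dotProduct_mulVec.mpr ⟨?_, fun x hx => ?_⟩
      · show (ε • (1:Matrix (Fin n) (Fin n) ℝ))ᴴ = _
        rw [conjTranspose_eq_transpose_of_trivial, Matrix.transpose_smul, Matrix.transpose_one]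
      · have hxx : (0:ℝ) < x ⬝ᵥ x := by
          rcases lt_or_eq_of_le (dot_self_nonneg x) with h | h
          · exact h
          · exact absurd (dotProduct_self_eq_zero.mp h.symm) hx
        simp only [Matrix.smul_mulVec, Matrix.one_mulVec, dotProduct_smul,
          smul_eq_mul, star_trivial]
        exact mul_pos hε hxx
  have hSdet : IsUnit S.det := isUnit_iff_ne_zero.mpr hSpd.det_pos.ne'
  have hSS : S * S⁻¹ = 1 := Matrix.mul_nonsing_inv S hSdet
  have hSiS : S⁻¹ * S = 1 := Matrix.nonsing_inv_mul S hSdet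
  have hSisym : (S⁻¹)ᵀ = S⁻¹ := by
    rw [Matrix.transpose_nonsing_inv, hSsym]
  have hPPBB : P * PRP = PRP := by
    have : P * (P * R * P) = P * P * R * P := by simp only [Matrix.mul_assoc]
    rw [hPRPdef, this, hPP]
  have hPBBP : PRP * P = PRP := by
    have : P * R * P * P = P * R * (P * P) := by simp only [Matrix.mul_assoc]
    rw [hPRPdef, this, hPP]
  have hPS : P * S = S * P := by
    rw [hSdef, Matrix.mul_sub, Matrix.sub_mul, Matrix.mul_smul, Matrix.smul_mul,
      Matrix.mul_one, Matrix.one_mul, hPPBB, hPBBP]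
  have hPSi : P * S⁻¹ = S⁻¹ * P := by
    calc P * S⁻¹ = S⁻¹ * S * (P * S⁻¹) := by rw [hSiS, Matrix.one_mul]
      _ = S⁻¹ * (S * P) * S⁻¹ := by simp only [Matrix.mul_assoc]
      _ = S⁻¹ * (P * S) * S⁻¹ := by rw [hPS]
      _ = S⁻¹ * P * (S * S⁻¹) := by simp only [Matrix.mul_assoc]
      _ = S⁻¹ * P := by rw [hSS, Matrix.mul_one]
  -- S₂ and its inverse
  set S₂ : Matrix (Fin m) (Fin m) ℝ := ce • 1 - Bᵀ * P * B with hS2def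
  have hBtPBsym : (Bᵀ * P * B)ᵀ = Bᵀ * P * B := by
    rw [Matrix.transpose_mul, Matrix.transpose_mul, Matrix.transpose_transpose, hPsym,
      Matrix.mul_assoc]
  have hS2sym : S₂ᵀ = S₂ := by
    rw [hS2def, Matrix.transpose_sub, Matrix.transpose_smul, Matrix.transpose_one, hBtPBsym]
  have hBt1PB : Bᵀ * (1 - P) * B = Bᵀ * B - Bᵀ * P * B := by
    rw [Matrix.mul_sub, Matrix.mul_one, Matrix.sub_mul]
  have hS2pd : S₂.PosDef := by
    have hsplit : S₂ = ((c • (1 : Matrix (Fin m) (Fin m) ℝ) - Bᵀ * B) + Bᵀ * (1 - P) * B)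
        + ε • 1 := by
      rw [hS2def, hcedef, add_smul, hBt1PB]; abel
    rw [hsplit]
    refine Matrix.PosDef.posSemidef_add (Matrix.PosSemidef.add hBB_one ?_) ?_
    · have hconj := psd_conj hone_sub_P Bᵀ
      rwa [Matrix.transpose_transpose] at hconj
    · refine Matrix.posDef_iff_dotProduct_mulVec.mpr ⟨?_, fun x hx => ?_⟩
      · show (ε • (1:Matrix (Fin m) (Fin m) ℝ))ᴴ = _
        rw [conjTranspose_eq_transpose_of_trivial, Matrix.transpose_smul, Matrix.transpose_one]
      · have hxx : (0:ℝ) < x ⬝ᵥ x := by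
          rcases lt_or_eq_of_le (dot_self_nonneg x) with h | h
          · exact h
          · exact absurd (dotProduct_self_eq_zero.mp h.symm) hx
        simp only [Matrix.smul_mulVec, Matrix.one_mulVec, dotProduct_smul,
          smul_eq_mul, star_trivial]
        exact mul_pos hε hxx
  have hS2det : IsUnit S₂.det := isUnit_iff_ne_zero.mpr hS2pd.det_pos.ne'
  have hS2S2i : S₂ * S₂⁻¹ = 1 := Matrix.mul_nonsing_inv S₂ hS2det
  have hS2iS2 : S₂⁻¹ * S₂ = 1 := Matrix.nonsing_inv_mul S₂ hS2det
  have hS2isym : (S₂⁻¹)ᵀ = S₂⁻¹ := by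
    rw [Matrix.transpose_nonsing_inv, hS2sym]
  -- the key inverse identity : 1 + W2 = ce • S₂⁻¹
  set W2 : Matrix (Fin m) (Fin m) ℝ := Bᵀ * P * S⁻¹ * P * B with hW2def
  have hS2BtP : S₂ * (Bᵀ * P) = Bᵀ * P * S := by
    rw [hS2def, hSdef, Matrix.sub_mul, Matrix.mul_sub, Matrix.smul_mul, Matrix.mul_smul,
      Matrix.one_mul, Matrix.mul_one]
    congr 1
    calc Bᵀ * P * B * (Bᵀ * P)
        = Bᵀ * (P * (R * P)) := by rw [hRdef]; simp only [Matrix.mul_assoc]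
      _ = Bᵀ * (P * (P * (R * P))) := by rw [hPPa]
      _ = Bᵀ * P * PRP := by rw [hPRPdef]; simp only [Matrix.mul_assoc]
  have hS2W2 : S₂ * W2 = Bᵀ * P * B := by
    calc S₂ * W2 = S₂ * (Bᵀ * P) * (S⁻¹ * (P * B)) := by
          rw [hW2def]; simp only [Matrix.mul_assoc]
      _ = Bᵀ * P * S * (S⁻¹ * (P * B)) := by rw [hS2BtP]
      _ = Bᵀ * P * (S * S⁻¹) * (P * B) := by simp only [Matrix.mul_assoc]
      _ = Bᵀ * (P * P) * B := by rw [hSS, Matrix.mul_one]; simp only [Matrix.mul_assoc]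
      _ = Bᵀ * P * B := by rw [hPP, Matrix.mul_assoc]
  have hKid : (1 : Matrix (Fin m) (Fin m) ℝ) + W2 = ce • S₂⁻¹ := by
    calc (1 : Matrix (Fin m) (Fin m) ℝ) + W2
        = S₂⁻¹ * S₂ * (1 + W2) := by rw [hS2iS2, Matrix.one_mul]
      _ = S₂⁻¹ * (S₂ * (1 + W2)) := by rw [Matrix.mul_assoc]
      _ = S₂⁻¹ * (S₂ + Bᵀ * P * B) := by rw [Matrix.mul_add, Matrix.mul_one, hS2W2]
      _ = S₂⁻¹ * (ce • 1) := by rw [hS2def]; congr 1; abel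
      _ = ce • S₂⁻¹ := by rw [Matrix.mul_smul, Matrix.mul_one]

  -- applied rewrite helpers
  have hQQa : ∀ {k : ℕ} (x : Matrix (Fin m) (Fin k) ℝ), Q * (Q * x) = Q * x := by
    intro k x; rw [← Matrix.mul_assoc, hQQ]
  have h1Pa : ∀ {k : ℕ} (x : Matrix (Fin n) (Fin k) ℝ), (1 - P) * ((1 - P) * x) = (1 - P) * x := by
    intro k x; rw [← Matrix.mul_assoc, h1P1P]
  have hS2iS2a : ∀ {k : ℕ} (x : Matrix (Fin m) (Fin k) ℝ), S₂⁻¹ * (S₂ * x) = x := by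
    intro k x; rw [← Matrix.mul_assoc, hS2iS2, Matrix.one_mul]
  have hSSa : ∀ {k : ℕ} (x : Matrix (Fin n) (Fin k) ℝ), S * (S⁻¹ * x) = x := by
    intro k x; rw [← Matrix.mul_assoc, hSS, Matrix.one_mul]
  -- the matrix Z
  set Z : Matrix (Fin n) (Fin n) ℝ := (1 - P) * B * S₂⁻¹ * Bᵀ * (1 - P) with hZdef
  have h1Ptsym : ((1:Matrix (Fin n) (Fin n) ℝ) - P)ᵀ = 1 - P := by
    rw [Matrix.transpose_sub, Matrix.transpose_one, hPsym]
  have hZsym : Zᵀ = Z := by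
    rw [hZdef]
    simp only [Matrix.transpose_mul, Matrix.transpose_transpose, h1Ptsym, hS2isym]
    simp only [Matrix.mul_assoc]
  have hmid2 : (S₂ - Bᵀ * (1 - P) * B).PosSemidef := by
    have heq : S₂ - Bᵀ * (1 - P) * B
        = (c • (1 : Matrix (Fin m) (Fin m) ℝ) - Bᵀ * B) + ε • 1 := by
      rw [hS2def, hBt1PB, hcedef, add_smul]; abel
    rw [heq]
    exact hBB_one.add (psd_smul (by
      have : ((1:Matrix (Fin m) (Fin m) ℝ)).PosSemidef := Matrix.PosSemidef.one
      exact this) hε.le)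
  have hEt : ((1 - P) * B * S₂⁻¹)ᵀ = S₂⁻¹ * (Bᵀ * (1 - P)) := by
    simp only [Matrix.transpose_mul, Matrix.transpose_transpose, h1Ptsym, hS2isym,
      Matrix.mul_assoc]
  have hZZ : Z - Z * Z
      = (1 - P) * B * S₂⁻¹ * (S₂ - Bᵀ * (1 - P) * B) * ((1 - P) * B * S₂⁻¹)ᵀ := by
    rw [hEt, Matrix.mul_sub, Matrix.sub_mul]
    congr 1
    · rw [hZdef]; simp only [Matrix.mul_assoc, hS2iS2a]
    · rw [hZdef]; simp only [Matrix.mul_assoc, h1Pa]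
  have hZ1 : ((1 : Matrix (Fin n) (Fin n) ℝ) - Z).PosSemidef := by
    refine psd_le_one_of_sq hZsym ?_
    rw [hZZ]
    exact psd_conj hmid2 _
  have hZabs : (1 - P) * Z * (1 - P) = Z := by
    rw [hZdef]
    simp only [Matrix.mul_assoc, h1Pa, h1P1P]
  have hZP : (((1:Matrix (Fin n) (Fin n) ℝ) - P) - Z).PosSemidef := by
    have hconj := psd_conj hZ1 (1 - P)
    have habs2 : (1 - P) * (1 - Z) * ((1:Matrix (Fin n) (Fin n) ℝ) - P)ᵀ = (1 - P) - Z := by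
      rw [h1Ptsym, Matrix.mul_sub (1 - P) 1 Z, Matrix.mul_one, Matrix.sub_mul, h1P1P, hZabs]
    rw [habs2] at hconj
    exact hconj

  -- D and G'
  set D : Matrix (Fin n) (Fin n) ℝ := P * R * (1 - P) with hDdef
  have hDt : Dᵀ = (1 - P) * R * P := by
    rw [hDdef]
    simp only [Matrix.transpose_mul, hRsym, hPsym, h1Ptsym, Matrix.mul_assoc]
  set G' : Matrix (Fin n) (Fin n) ℝ := P - S⁻¹ * D with hG'def
  have hGt : G'ᵀ = P - Dᵀ * S⁻¹ := by
    rw [hG'def, Matrix.transpose_sub, hPsym, Matrix.transpose_mul, hSisym]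
  have hPD : P * D = D := by
    calc P * D = P * P * R * (1 - P) := by rw [hDdef]; simp only [Matrix.mul_assoc]
      _ = D := by rw [hPP, hDdef]
  have hDtP : Dᵀ * P = Dᵀ := by
    rw [hDt, Matrix.mul_assoc ((1 - P) * R) P P, hPP]
  have hGX : G' * X = X := by
    rw [hG'def, Matrix.sub_mul, hPX]
    have hDX : D * X = 0 := by
      calc D * X = P * R * ((1 - P) * X) := by rw [hDdef]; simp only [Matrix.mul_assoc]
        _ = 0 := by rw [h1PX, Matrix.mul_zero]
    rw [Matrix.mul_assoc, hDX, Matrix.mul_zero, sub_zero]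
  -- the interpolating matrix M
  set W : Matrix (Fin m) (Fin n) ℝ := (1 - Q) * (A * G') with hWdef
  set M : Matrix (Fin m) (Fin n) ℝ := Bᵀ + W with hMdef
  have h1Qtsym : ((1:Matrix (Fin m) (Fin m) ℝ) - Q)ᵀ = 1 - Q := by
    rw [Matrix.transpose_sub, Matrix.transpose_one, hQsym]
  have hMt : Mᵀ = B + Wᵀ := by
    rw [hMdef, Matrix.transpose_add, Matrix.transpose_transpose]
  have hMX : M * X = Y := by
    rw [hMdef, Matrix.add_mul, hBtX]
    have hWX : W * X = (1 - Q) * Y := by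
      calc W * X = (1 - Q) * (A * (G' * X)) := by rw [hWdef]; simp only [Matrix.mul_assoc]
        _ = (1 - Q) * Y := by rw [hGX, hAX]
    rw [hWX, Matrix.sub_mul, Matrix.one_mul]
    abel
  have hMU : Mᵀ * U = V := by
    rw [hMt, Matrix.add_mul, hBU]
    have hWtU : Wᵀ * U = 0 := by
      rw [hWdef, Matrix.transpose_mul, h1Qtsym, Matrix.mul_assoc, h1QU, Matrix.mul_zero]
    rw [hWtU, add_zero]
  -- claim 1
  have hQAt : (Q * A)ᵀ = Aᵀ * Q := by rw [Matrix.transpose_mul, hQsym]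
  have hAQAm : Aᵀ * (Q * A) = PRP := by
    calc Aᵀ * (Q * A) = Aᵀ * (Q * (Q * A)) := by rw [hQQa]
      _ = Aᵀ * Q * (Q * A) := by rw [Matrix.mul_assoc]
      _ = (Q * A)ᵀ * (Q * A) := by rw [hQAt]
      _ = (Bᵀ * P)ᵀ * (Bᵀ * P) := by rw [hcompat]
      _ = PRP := by
          rw [Matrix.transpose_mul, hPsym, Matrix.transpose_transpose, hPRPdef, hRdef]
          simp only [Matrix.mul_assoc]
  have hBW : B * W = 0 := by rw [hWdef, ← Matrix.mul_assoc, hB1Q, Matrix.zero_mul]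
  have hWtBt : Wᵀ * Bᵀ = 0 := by rw [← Matrix.transpose_mul, hBW, Matrix.transpose_zero]
  have hWtW : Wᵀ * W = G'ᵀ * (Aᵀ * A) * G' - G'ᵀ * PRP * G' := by
    have e1 : Wᵀ * W = (A * G')ᵀ * ((1 - Q) * (A * G')) := by
      rw [hWdef, Matrix.transpose_mul, h1Qtsym, Matrix.mul_assoc, ← Matrix.mul_assoc (1 - Q),
        h1Q1Q]
    rw [e1, Matrix.sub_mul, Matrix.one_mul, Matrix.mul_sub]
    congr 1
    · rw [Matrix.transpose_mul]
      simp only [Matrix.mul_assoc]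
    · calc (A * G')ᵀ * (Q * (A * G')) = G'ᵀ * (Aᵀ * (Q * A) * G') := by
            rw [Matrix.transpose_mul]
            simp only [Matrix.mul_assoc]
        _ = G'ᵀ * PRP * G' := by rw [hAQAm, ← Matrix.mul_assoc]
  have claim1 : Mᵀ * M = R + (G'ᵀ * (Aᵀ * A) * G' - G'ᵀ * PRP * G') := by
    rw [hMt, hMdef, Matrix.add_mul, Matrix.mul_add, Matrix.mul_add, hBW, hWtBt, hWtW, hRdef]
    abel
  -- claim 2
  have hPSP : P * S * P = ce • P - PRP := by
    rw [hSdef, Matrix.mul_sub, Matrix.mul_smul, Matrix.mul_one, Matrix.sub_mul,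
      Matrix.smul_mul, hPP, hPPBB, hPBBP]
  have hGtS : G'ᵀ * S = P * S - Dᵀ := by
    rw [hGt, Matrix.sub_mul, Matrix.mul_assoc, hSiS, Matrix.mul_one]
  have hGtSG : G'ᵀ * S * G' = (ce • P - PRP) - D - Dᵀ + Dᵀ * (S⁻¹ * D) := by
    rw [hGtS, hG'def, Matrix.mul_sub, Matrix.sub_mul, Matrix.sub_mul]
    have e2 : P * S * (S⁻¹ * D) = D := by
      rw [Matrix.mul_assoc P S, hSSa, hPD]
    rw [e2, hPSP, hDtP]
    abel
  have hDSD : Dᵀ * (S⁻¹ * D) = (1 - P) * (B * (W2 * (Bᵀ * (1 - P)))) := by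
    rw [hDt, hDdef, hW2def, hRdef]
    simp only [Matrix.mul_assoc]
  have hDexp : D = P * R - PRP := by
    rw [hDdef, Matrix.mul_sub, Matrix.mul_one, hPRPdef]
  have hDtexp : Dᵀ = R * P - PRP := by
    rw [hDt, Matrix.sub_mul, Matrix.one_mul, Matrix.sub_mul, hPRPdef]
  have h1PR1P : (1 - P) * R * (1 - P) = R - R * P - P * R + PRP := by
    rw [Matrix.sub_mul, Matrix.one_mul, Matrix.sub_mul, Matrix.mul_sub, Matrix.mul_sub,
      Matrix.mul_one, Matrix.mul_one, ← hPRPdef]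
    abel
  have hfact : (1 - P) * R * (1 - P) + (1 - P) * (B * (W2 * (Bᵀ * (1 - P)))) = ce • Z := by
    have e5 : (1 - P) * R * (1 - P) + (1 - P) * (B * (W2 * (Bᵀ * (1 - P))))
        = (1 - P) * (B * (((1 : Matrix (Fin m) (Fin m) ℝ) + W2) * (Bᵀ * (1 - P)))) := by
      rw [Matrix.add_mul, Matrix.one_mul, Matrix.mul_add, Matrix.mul_add, hRdef]
      simp only [Matrix.mul_assoc]
    rw [e5, hKid, Matrix.smul_mul, Matrix.mul_smul, Matrix.mul_smul, hZdef]
    congr 1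
    simp only [Matrix.mul_assoc]
  have claim2 : R + G'ᵀ * S * G' = ce • P + ce • Z := by
    rw [hGtSG, hDSD, hDtexp, hDexp, ← hfact, h1PR1P]
    abel
  -- final identity
  have hexp1 : G'ᵀ * S * G' = ce • (G'ᵀ * G') - G'ᵀ * PRP * G' := by
    rw [hSdef]; exact conj_sub_smul ce G' PRP
  have hexp2 : G'ᵀ * (c • 1 - Aᵀ * A) * G' = c • (G'ᵀ * G') - G'ᵀ * (Aᵀ * A) * G' :=
    conj_sub_smul c G' (Aᵀ * A)
  have hPZ : ce • P + ce • Z = R + (ce • (G'ᵀ * G') - G'ᵀ * PRP * G') := by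
    rw [← claim2, hexp1]
  have final : ce • (1 : Matrix (Fin n) (Fin n) ℝ) - Mᵀ * M
      = G'ᵀ * (c • 1 - Aᵀ * A) * G' + ε • (G'ᵀ * G') + ce • ((1 - P) - Z) := by
    rw [claim1, hexp2]
    have hR : R = ce • P + ce • Z - ce • (G'ᵀ * G') + G'ᵀ * PRP * G' := by
      rw [hPZ]; module
    rw [hR, hcedef]
    module
  refine ⟨M, hMX, hMU, ?_⟩
  have hpsd : (G'ᵀ * (c • 1 - Aᵀ * A) * G' + ε • (G'ᵀ * G') + ce • ((1 - P) - Z)).PosSemidef := by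
    refine Matrix.PosSemidef.add (Matrix.PosSemidef.add ?_ ?_) ?_
    · have h10 := psd_conj hAA_one G'ᵀ
      rwa [Matrix.transpose_transpose] at h10
    · exact psd_smul (psd_mul_self G') hε.le
    · exact psd_smul hZP hce
  have hgoal : (L ^ 2 + ε) • (1 : Matrix (Fin n) (Fin n) ℝ) - Mᵀ * M = ce • 1 - Mᵀ * M := by
    rw [hcedef, hcdef]
  rw [hgoal, final]
  exact hpsd

end Core
section Limit
open Filter Topology

variable {n m N₁ N₂ : ℕ}

lemma exists_M_limit (L : ℝ) (hL : 0 ≤ L)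
    (X : Matrix (Fin n) (Fin N₁) ℝ) (Y : Matrix (Fin m) (Fin N₁) ℝ)
    (U : Matrix (Fin m) (Fin N₂) ℝ) (V : Matrix (Fin n) (Fin N₂) ℝ)
    (h1 : Xᵀ * V = Yᵀ * U)
    (h2 : (L ^ 2 • (Xᵀ * X) - Yᵀ * Y).PosSemidef)
    (h3 : (L ^ 2 • (Uᵀ * U) - Vᵀ * V).PosSemidef) :
    ∃ M : Matrix (Fin m) (Fin n) ℝ, M * X = Y ∧ Mᵀ * U = V ∧
      (L ^ 2 • (1 : Matrix (Fin n) (Fin n) ℝ) - Mᵀ * M).PosSemidef := by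
  have hch : ∀ k : ℕ, ∃ M : Matrix (Fin m) (Fin n) ℝ, M * X = Y ∧ Mᵀ * U = V ∧
      ((L ^ 2 + 1 / (k + 1)) • (1 : Matrix (Fin n) (Fin n) ℝ) - Mᵀ * M).PosSemidef := by
    intro k
    exact exists_M_eps L (1 / (k + 1)) hL (by positivity) X Y U V h1 h2 h3
  choose Ms hMs1 hMs2 hMs3 using hch
  -- quadratic form bound for each k
  have hquad : ∀ (k : ℕ) (z : Fin n → ℝ),
      ((Ms k) *ᵥ z) ⬝ᵥ ((Ms k) *ᵥ z) ≤ (L ^ 2 + 1 / (k + 1)) * (z ⬝ᵥ z) := by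
    intro k z
    have h0 := psd_quad (hMs3 k) z
    rw [Matrix.sub_mulVec, dotProduct_sub, Matrix.smul_mulVec,
      Matrix.one_mulVec, dotProduct_smul, smul_eq_mul, quad_mul] at h0
    linarith
  -- entrywise bound
  set Rb : ℝ := Real.sqrt (L ^ 2 + 1) with hRb
  have hRb0 : 0 ≤ Rb := Real.sqrt_nonneg _
  have hentry : ∀ (k : ℕ) (i : Fin m) (j : Fin n), |Ms k i j| ≤ Rb := by
    intro k i j
    have hq := hquad k (Pi.single j 1)
    have hsingle : (Pi.single j 1 : Fin n → ℝ) ⬝ᵥ Pi.single j 1 = 1 := by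
      simp [dotProduct_single]
    have hcol : ((Ms k) *ᵥ Pi.single j 1) ⬝ᵥ ((Ms k) *ᵥ Pi.single j 1)
        = ∑ i', (Ms k i' j) ^ 2 := by
      simp [Matrix.mulVec_single, dotProduct, pow_two]
    rw [hsingle, hcol, mul_one] at hq
    have hle1 : (Ms k i j) ^ 2 ≤ ∑ i', (Ms k i' j) ^ 2 :=
      Finset.single_le_sum (fun i' _ => sq_nonneg (Ms k i' j)) (Finset.mem_univ i)
    have hle2 : (Ms k i j) ^ 2 ≤ L ^ 2 + 1 := by
      have hek : 1 / ((k : ℝ) + 1) ≤ 1 := by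
        rw [div_le_one (by positivity)]; linarith [Nat.cast_nonneg (α := ℝ) k]
      linarith
    have := Real.sqrt_le_sqrt hle2
    rwa [Real.sqrt_sq_eq_abs] at this
  -- pass to a convergent subsequence in the function space
  set E := (Fin m → Fin n → ℝ)
  set x : ℕ → E := fun k i j => Ms k i j with hx
  have hmem : ∀ k, x k ∈ Metric.closedBall (0 : E) Rb := by
    intro k
    rw [Metric.mem_closedBall, dist_zero_right]
    rw [pi_norm_le_iff_of_nonneg hRb0]
    intro i
    rw [pi_norm_le_iff_of_nonneg hRb0]
    intro j
    rw [Real.norm_eq_abs]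
    exact hentry k i j
  obtain ⟨a, _, φ, hφ, hconv⟩ :=
    (isCompact_closedBall (0 : E) Rb).tendsto_subseq hmem
  have hij : ∀ (i : Fin m) (j : Fin n),
      Tendsto (fun k => Ms (φ k) i j) atTop (𝓝 (a i j)) := by
    intro i j
    have h5 := (tendsto_pi_nhds.mp hconv) i
    exact (tendsto_pi_nhds.mp h5) j
  set MM : Matrix (Fin m) (Fin n) ℝ := Matrix.of a with hMM
  have hφtop : Tendsto φ atTop atTop := hφ.tendsto_atTop
  refine ⟨MM, ?_, ?_, ?_⟩
  · -- MM * X = Y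
    ext i j
    have hconst : Tendsto (fun k => (Ms (φ k) * X) i j) atTop (𝓝 ((MM * X) i j)) := by
      simp only [Matrix.mul_apply]
      exact tendsto_finset_sum _ fun l _ => (hij i l).mul tendsto_const_nhds
    have heq : (fun k => (Ms (φ k) * X) i j) = fun _ => Y i j := by
      funext k; rw [hMs1 (φ k)]
    rw [heq] at hconst
    exact (tendsto_nhds_unique tendsto_const_nhds hconst).symm ▸ rfl
  · -- MMᵀ * U = V
    ext i j
    have hconst : Tendsto (fun k => ((Ms (φ k))ᵀ * U) i j) atTop (𝓝 ((MMᵀ * U) i j)) := by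
      simp only [Matrix.mul_apply, Matrix.transpose_apply]
      exact tendsto_finset_sum _ fun l _ => (hij l i).mul tendsto_const_nhds
    have heq : (fun k => ((Ms (φ k))ᵀ * U) i j) = fun _ => V i j := by
      funext k; rw [hMs2 (φ k)]
    rw [heq] at hconst
    exact (tendsto_nhds_unique tendsto_const_nhds hconst).symm ▸ rfl
  · -- PSD
    refine psd_of_quad _ ?_ fun z => ?_
    · rw [Matrix.transpose_sub, Matrix.transpose_smul, Matrix.transpose_one,
        Matrix.transpose_mul, Matrix.transpose_transpose]
    · rw [Matrix.sub_mulVec, dotProduct_sub, Matrix.smul_mulVec,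
        Matrix.one_mulVec, dotProduct_smul, smul_eq_mul, quad_mul, sub_nonneg]
      -- limit of the quadratic forms
      have hvec : ∀ i : Fin m, Tendsto (fun k => ((Ms (φ k)) *ᵥ z) i) atTop
          (𝓝 ((MM *ᵥ z) i)) := by
        intro i
        simp only [Matrix.mulVec, dotProduct]
        exact tendsto_finset_sum _ fun l _ => (hij i l).mul tendsto_const_nhds
      have hlhs : Tendsto (fun k => ((Ms (φ k)) *ᵥ z) ⬝ᵥ ((Ms (φ k)) *ᵥ z)) atTop
          (𝓝 ((MM *ᵥ z) ⬝ᵥ (MM *ᵥ z))) := by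
        simp only [dotProduct]
        exact tendsto_finset_sum _ fun i _ => (hvec i).mul (hvec i)
      have hrhs : Tendsto (fun k => (L ^ 2 + 1 / ((φ k : ℝ) + 1)) * (z ⬝ᵥ z)) atTop
          (𝓝 (L ^ 2 * (z ⬝ᵥ z))) := by
        have h0 : Tendsto (fun k => 1 / ((φ k : ℝ) + 1)) atTop (𝓝 0) :=
          tendsto_one_div_add_atTop_nhds_zero_nat.comp hφtop
        have : Tendsto (fun k => L ^ 2 + 1 / ((φ k : ℝ) + 1)) atTop (𝓝 (L ^ 2 + 0)) :=
          tendsto_const_nhds.add h0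
        rw [add_zero] at this
        exact this.mul tendsto_const_nhds
      exact le_of_tendsto_of_tendsto' hlhs hrhs fun k => hquad (φ k) z
end Limit
/-- Lemma 3.9 (Step 1): under the interpolation conditions, there is an interpolable
quadruple `(X_R, Y_R, U_R, V_R)` with the same Gram matrices as `(X, Y, U, V)`. -/
theorem exists_interpolable_with_same_gram
    (n m N₁ N₂ : ℕ) (L : ℝ) (hL : 0 ≤ L)
    (X : Matrix (Fin n) (Fin N₁) ℝ) (Y : Matrix (Fin m) (Fin N₁) ℝ)
    (U : Matrix (Fin m) (Fin N₂) ℝ) (V : Matrix (Fin n) (Fin N₂) ℝ)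
    (h1 : Xᵀ * V = Yᵀ * U)
    (h2 : (L ^ 2 • (Xᵀ * X) - Yᵀ * Y).PosSemidef)
    (h3 : (L ^ 2 • (Uᵀ * U) - Vᵀ * V).PosSemidef) :
    ∃ (nR mR : ℕ) (XR : Matrix (Fin nR) (Fin N₁) ℝ) (YR : Matrix (Fin mR) (Fin N₁) ℝ)
      (UR : Matrix (Fin mR) (Fin N₂) ℝ) (VR : Matrix (Fin nR) (Fin N₂) ℝ),
      (Matrix.fromCols X V)ᵀ * Matrix.fromCols X V =
        (Matrix.fromCols XR VR)ᵀ * Matrix.fromCols XR VR ∧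
      (Matrix.fromCols Y U)ᵀ * Matrix.fromCols Y U =
        (Matrix.fromCols YR UR)ᵀ * Matrix.fromCols YR UR ∧
      ∃ MR : Matrix (Fin mR) (Fin nR) ℝ,
        (L ^ 2 • (1 : Matrix (Fin nR) (Fin nR) ℝ) - MRᵀ * MR).PosSemidef ∧
        YR = MR * XR ∧ VR = MRᵀ * UR := by
  obtain ⟨M, hMX, hMU, hpsd⟩ := exists_M_limit L hL X Y U V h1 h2 h3
  exact ⟨n, m, X, Y, U, V, rfl, rfl, M, hpsd, hMX.symm, hMU.symm⟩
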